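/- (PINNs Lagrangian error identity) Let ℒu = −div(A∇u) + u, and let (u*, λ*) be a saddle point of L_R(u,λ) = ½‖ℒu − f‖²_{L²(Ω)} + (γ/2)‖u−g‖²_{L²(∂Ω)} − ⟨λ, u−g⟩ over H²(Ω) × H^{−3/2}(∂Ω), and u^k the minimizer of u ↦ L_R(u, λ^k). Then ‖ℒ(u^k − u*)‖²_{L²(Ω)} + γ‖u^k − u*‖²_{L²(∂Ω)} = ⟨λ^k − λ*, u^k − u*⟩, where ⟨·,·⟩ is the H^{−3/2}(∂Ω) × H^{3/2}(∂Ω) pairing. -/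

import Mathlib

open scoped RealInnerProductSpace

/-- PINNs Lagrangian error identity (abstract formulation). `V2` plays the role of
`H²(Ω)`, `Lop u = ℒu = −div(A∇u) + u ∈ L²(Ω)`, `trh` is the trace into `Bh = H^{3/2}(∂Ω)`
with embedding `j : Bh → L²(∂Ω)`.  If `(u*, λ*)` is a saddle point of
`L_R(u,λ) = ½‖ℒu − f‖² + (γ/2)‖u−g‖²_{L²(∂Ω)} − ⟨λ, u−g⟩` (so the Euler–Lagrange
conditions hold, and `u* = g` on `∂Ω`) and `u^k` minimizes `L_R(·, λ^k)`, then
`‖ℒ(u^k−u*)‖²_{L²(Ω)} + γ‖u^k−u*‖²_{L²(∂Ω)} = ⟨λ^k − λ*, u^k − u*⟩`. -/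
theorem pinns_lagrangian_error_identity
    (V2 L2 L2b Bh : Type*)
    [NormedAddCommGroup V2] [InnerProductSpace ℝ V2]
    [NormedAddCommGroup L2] [InnerProductSpace ℝ L2]
    [NormedAddCommGroup L2b] [InnerProductSpace ℝ L2b]
    [NormedAddCommGroup Bh] [InnerProductSpace ℝ Bh]
    (Lop : V2 →L[ℝ] L2)    -- u ↦ ℒu = −div(A∇u) + u
    (trh : V2 →L[ℝ] Bh)    -- trace operator H²(Ω) → H^{3/2}(∂Ω)
    (j : Bh →L[ℝ] L2b)     -- embedding H^{3/2}(∂Ω) ↪ L²(∂Ω)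
    (f : L2) (g : Bh) (γ : ℝ) (hγ : 0 ≤ γ)
    (ustar uk : V2) (lamstar lamk : StrongDual ℝ Bh)
    -- Euler–Lagrange conditions for the saddle point (u*, λ*)
    (hELstar : ∀ φ : V2,
      ⟪Lop ustar - f, Lop φ⟫ + γ * ⟪j (trh ustar) - j g, j (trh φ)⟫ = lamstar (trh φ))
    (hstar_bc : trh ustar = g)
    -- Euler–Lagrange conditions for u^k minimizing L_R(·, λ^k)
    (hELk : ∀ φ : V2,
      ⟪Lop uk - f, Lop φ⟫ + γ * ⟪j (trh uk) - j g, j (trh φ)⟫ = lamk (trh φ)) :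
    ‖Lop (uk - ustar)‖ ^ 2 + γ * ‖j (trh (uk - ustar))‖ ^ 2
      = (lamk - lamstar) (trh (uk - ustar)) := by
  set φ := uk - ustar with hφ
  have h1 := hELk φ
  have h2 := hELstar φ
  have key : ⟪Lop uk - f, Lop φ⟫ - ⟪Lop ustar - f, Lop φ⟫
      + γ * (⟪j (trh uk) - j g, j (trh φ)⟫ - ⟪j (trh ustar) - j g, j (trh φ)⟫)
      = lamk (trh φ) - lamstar (trh φ) := by
    rw [mul_sub]; linarith
  have e1 : ⟪Lop uk - f, Lop φ⟫ - ⟪Lop ustar - f, Lop φ⟫ = ‖Lop φ‖ ^ 2 := by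
    rw [← inner_sub_left]
    have : Lop uk - f - (Lop ustar - f) = Lop φ := by
      rw [hφ, map_sub]; abel
    rw [this, real_inner_self_eq_norm_sq]
  have e2 : ⟪j (trh uk) - j g, j (trh φ)⟫ - ⟪j (trh ustar) - j g, j (trh φ)⟫
      = ‖j (trh φ)‖ ^ 2 := by
    rw [← inner_sub_left]
    have : j (trh uk) - j g - (j (trh ustar) - j g) = j (trh φ) := by
      rw [hφ, map_sub, map_sub]; abel
    rw [this, real_inner_self_eq_norm_sq]
  rw [e1, e2] at key
  simpa using key
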